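/- Let X₁, …, X_n, X_{n+1} be exchangeable (in particular, i.i.d.) real-valued random variables with almost surely distinct values, and let q be the ⌈(1−ε)(n+1)⌉-th smallest value among X₁, …, X_n (assuming ⌈(1−ε)(n+1)⌉ ≤ n). Then P(X_{n+1} ≤ q) ≥ 1 − ε. -/

import Mathlib

open MeasureTheory ProbabilityTheory Finset

private lemma sorted_getElem_lt_iff {s : List ℝ} (hs : s.Pairwise (· ≤ ·)) (t : ℝ) (j : ℕ)
    (hj : j < s.length) :
    s[j] < t ↔ j < s.countP (fun x => decide (x < t)) := by
  constructor
  · intro h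
    have h1 : ∀ a ∈ s.take (j+1), (fun x => decide (x < t)) a = true := by
      intro a ha
      obtain ⟨i, hi, rfl⟩ := List.mem_iff_getElem.mp ha
      have hi' : i ≤ j := by simpa using Nat.lt_succ_iff.mp (lt_of_lt_of_le hi (by simp))
      rw [List.getElem_take]
      simp only [decide_eq_true_eq]
      rcases eq_or_lt_of_le hi' with rfl | hlt
      · exact h
      · exact lt_of_le_of_lt (hs.rel_get_of_lt (a := ⟨i, by omega⟩) (b := ⟨j, hj⟩) hlt) h
    have := List.countP_eq_length.mpr h1
    calc j < (s.take (j+1)).length := by simpa using by omega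
    _ = (s.take (j+1)).countP _ := this.symm
    _ ≤ s.countP _ := by
        conv_rhs => rw [← List.take_append_drop (j+1) s]
        rw [List.countP_append]; omega
  · intro h
    by_contra hc
    push_neg at hc
    have h0 : ∀ a ∈ s.drop j, (fun x => decide (x < t)) a = false := by
      intro a ha
      obtain ⟨i, hi, rfl⟩ := List.mem_iff_getElem.mp ha
      rw [List.getElem_drop]
      simp only [decide_eq_false_iff_not, not_lt]
      refine le_trans hc ?_
      rcases Nat.eq_zero_or_pos i with rfl | hip
      · simp
      · exact hs.rel_get_of_lt (a := ⟨j, hj⟩) (b := ⟨j+i, by simp at hi; omega⟩) (by simp; omega)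
    have hz : (s.drop j).countP (fun x => decide (x < t)) = 0 :=
      List.countP_eq_zero.mpr (fun a ha => by simp only [h0 a ha]; simp)
    have : s.countP (fun x => decide (x < t)) ≤ j := by
      conv_lhs => rw [← List.take_append_drop j s]
      rw [List.countP_append, hz]
      calc (s.take j).countP _ ≤ (s.take j).length := List.countP_le_length
        _ ≤ j := List.length_take_le j s
    omega

private lemma countP_ofFn_eq_card {n : ℕ} (f : Fin n → ℝ) (t : ℝ) :
    (List.ofFn f).countP (fun x => decide (x < t)) =
      (Finset.univ.filter (fun i => f i < t)).card := by
  rw [List.ofFn_eq_map, List.countP_map, Finset.card_filter, Fin.sum_univ_def]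
  induction (List.finRange n) with
  | nil => simp
  | cons a l ih =>
    simp [List.countP_cons, ih]
    rcases lt_or_ge (f a) t with h|h <;> simp [h, not_lt.mpr] <;> try omega

private lemma card_filter_comp_perm {α : Type*} [Fintype α] [DecidableEq α] (e : Equiv.Perm α)
    (p : α → Prop) [DecidablePred p] :
    (Finset.univ.filter (fun i => p (e i))).card = (Finset.univ.filter p).card := by
  apply Finset.card_bij (fun a _ => e a)
  · intro a ha; simp at ha ⊢; exact ha
  · intro a _ b _ h; exact e.injective h
  · intro b hb; exact ⟨e.symm b, by simp at hb ⊢; exact hb, by simp⟩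

private lemma card_rank_lt {N : ℕ} (x : Fin N → ℝ) (hx : Function.Injective x) (k : ℕ)
    (hk : k < N) :
    (Finset.univ.filter
      (fun j => (Finset.univ.filter (fun i => x i < x j)).card < k)).card = k := by
  set R : Fin N → ℕ := fun j => (Finset.univ.filter (fun i => x i < x j)).card with hR
  have hRlt : ∀ j, R j < N := by
    intro j
    have : Finset.univ.filter (fun i => x i < x j) ⊆ Finset.univ.erase j := by
      intro i hi
      simp only [mem_filter, mem_univ, true_and] at hi
      exact Finset.mem_erase.mpr ⟨fun h => absurd (h ▸ hi) (lt_irrefl _), mem_univ _⟩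
    calc R j ≤ (Finset.univ.erase j).card := Finset.card_le_card this
    _ < N := by rw [Finset.card_erase_of_mem (mem_univ _)]; simp [Nat.sub_lt]; omega
  have hmono : ∀ j j', x j < x j' → R j < R j' := by
    intro j j' h
    apply Finset.card_lt_card
    constructor
    · intro i hi
      simp only [mem_filter, mem_univ, true_and] at hi ⊢
      exact hi.trans h
    · intro hsub
      have := hsub (Finset.mem_filter.mpr ⟨mem_univ j, h⟩)
      simp only [mem_filter, mem_univ, true_and] at this
      exact absurd this (lt_irrefl _)
  set ρ : Fin N → Fin N := fun j => ⟨R j, hRlt j⟩ with hρ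
  have hinj : Function.Injective ρ := by
    intro a b hab
    by_contra hne
    rcases lt_or_gt_of_ne (fun h : x a = x b => hne (hx h)) with h | h
    · exact absurd (congrArg Fin.val hab) (Nat.ne_of_lt (hmono _ _ h))
    · exact absurd (congrArg Fin.val hab) (Nat.ne_of_gt (hmono _ _ h))
  have hbij : Function.Bijective ρ := (Finite.injective_iff_bijective).mp hinj
  let e : Fin N ≃ Fin N := Equiv.ofBijective ρ hbij
  have key : ∀ j, (R j < k ↔ e j ∈ Finset.Iio (⟨k, hk⟩ : Fin N)) := by
    intro j; simp [e, Equiv.ofBijective, ρ, Fin.lt_def]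
  calc (Finset.univ.filter (fun j => R j < k)).card
      = (Finset.univ.filter (fun j => e j ∈ Finset.Iio (⟨k, hk⟩ : Fin N))).card := by
        apply Finset.card_bij (fun a _ => a) <;> simp_all
    _ = (Finset.univ.filter (fun m => m ∈ Finset.Iio (⟨k, hk⟩ : Fin N))).card := by
        apply Finset.card_bij (fun a _ => e a)
        · intro a ha; simp_all
        · intro a _ b _ h; exact e.injective h
        · intro b hb; exact ⟨e.symm b, by simp_all, by simp⟩
    _ = k := by
        have : (Finset.univ.filter (fun m => m ∈ Finset.Iio (⟨k, hk⟩ : Fin N)))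
            = Finset.Iio (⟨k, hk⟩ : Fin N) := by ext m; simp
        rw [this, Fin.card_Iio]

theorem stmt_1 {Ω : Type*} [MeasurableSpace Ω] (μ : Measure Ω) [IsProbabilityMeasure μ]
    (n : ℕ) (hn : 0 < n) (X : Fin (n + 1) → Ω → ℝ)
    (hmeas : ∀ i, Measurable (X i))
    (hexch : ∀ σ : Equiv.Perm (Fin (n + 1)),
      Measure.map (fun ω => fun i => X (σ i) ω) μ = Measure.map (fun ω => fun i => X i ω) μ)
    (hdistinct : ∀ᵐ ω ∂μ, Function.Injective fun i => X i ω)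
    (ε : ℝ) (hε : 0 < ε) (hε1 : ε < 1)
    (k : ℕ) (hk : k = ⌈(1 - ε) * (n + 1)⌉₊) (hkn : k ≤ n) (hk1 : 1 ≤ k)
    (q : Ω → ℝ)
    (hq : ∀ ω, q ω =
      ((List.ofFn fun i : Fin n => X i.castSucc ω).insertionSort (· ≤ ·)).getD (k - 1) 0) :
    (μ {ω | X (Fin.last n) ω ≤ q ω}).toReal ≥ 1 - ε := by
  set R : Fin (n+1) → (Fin (n+1) → ℝ) → ℕ :=
    fun j x => (Finset.univ.filter (fun i => x i < x j)).card with hRdef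
  set Φ : Ω → (Fin (n+1) → ℝ) := fun ω i => X i ω with hΦdef
  have hΦ : Measurable Φ := measurable_pi_lambda _ (fun i => hmeas i)
  have hRmeas : ∀ j, Measurable (fun x : Fin (n+1) → ℝ => R j x) := by
    intro j
    have h : (fun x : Fin (n+1) → ℝ => R j x)
        = fun x => ∑ i : Fin (n+1), if x i < x j then 1 else 0 := by
      funext x; simp only [hRdef]; rw [Finset.card_filter]
    rw [h]
    exact Finset.measurable_sum _ fun i _ =>
      Measurable.ite (measurableSet_lt (measurable_pi_apply i) (measurable_pi_apply j))
        measurable_const measurable_const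
  set S : Set (Fin (n+1) → ℝ) := {x | R (Fin.last n) x < k} with hSdef
  have hS : MeasurableSet S := hRmeas (Fin.last n) (MeasurableSet.of_discrete (s := Set.Iio k))
  set A : Fin (n+1) → Set Ω := fun j => {ω | R j (Φ ω) < k} with hAdef
  have hA : ∀ j, MeasurableSet (A j) := fun j =>
    (hRmeas j).comp hΦ (MeasurableSet.of_discrete (s := Set.Iio k))
  -- exchangeability: all A j have the same measure
  have hAeq : ∀ j, μ (A j) = μ (A (Fin.last n)) := by
    intro j
    set σ := Equiv.swap j (Fin.last n) with hσ
    set Φσ : Ω → (Fin (n+1) → ℝ) := fun ω i => X (σ i) ω with hΦσdef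
    have hΦσ : Measurable Φσ := measurable_pi_lambda _ (fun i => hmeas (σ i))
    have h1 : Φσ ⁻¹' S = A j := by
      ext ω
      simp only [Set.mem_preimage, hSdef, Set.mem_setOf_eq, hAdef]
      have h2 : R (Fin.last n) (Φσ ω) = R (σ (Fin.last n)) (Φ ω) :=
        card_filter_comp_perm σ (fun i => X i ω < X (σ (Fin.last n)) ω)
      rw [h2, hσ, Equiv.swap_apply_right]
    have h2 : Φ ⁻¹' S = A (Fin.last n) := rfl
    calc μ (A j) = μ (Φσ ⁻¹' S) := by rw [h1]
      _ = (Measure.map Φσ μ) S := (Measure.map_apply hΦσ hS).symm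
      _ = (Measure.map Φ μ) S := by rw [hΦσdef, hΦdef, hexch σ]
      _ = μ (Φ ⁻¹' S) := Measure.map_apply hΦ hS
      _ = μ (A (Fin.last n)) := by rw [h2]
  -- sum of measures equals k
  have hsum : ∑ j : Fin (n+1), μ (A j) = (k : ENNReal) := by
    calc ∑ j : Fin (n+1), μ (A j)
        = ∑ j : Fin (n+1), ∫⁻ ω, (A j).indicator (1 : Ω → ENNReal) ω ∂μ := by
          exact Finset.sum_congr rfl fun j _ => (lintegral_indicator_one (hA j)).symm
      _ = ∫⁻ ω, ∑ j : Fin (n+1), (A j).indicator (1 : Ω → ENNReal) ω ∂μ :=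
          (lintegral_finset_sum _ fun j _ => measurable_one.indicator (hA j)).symm
      _ = ∫⁻ _, (k : ENNReal) ∂μ := by
          apply lintegral_congr_ae
          filter_upwards [hdistinct] with ω hω
          have hω' : Function.Injective (Φ ω) := hω
          have hcount := card_rank_lt (Φ ω) hω' k (by omega)
          calc ∑ j : Fin (n+1), (A j).indicator (1 : Ω → ENNReal) ω
              = ∑ j : Fin (n+1), if ω ∈ A j then (1 : ENNReal) else 0 := by
                exact Finset.sum_congr rfl fun j _ => Set.indicator_apply _ _ _
            _ = ((Finset.univ.filter (fun j => ω ∈ A j)).card : ENNReal) := by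
                rw [Finset.card_filter]; push_cast [apply_ite]; rfl
            _ = (k : ENNReal) := by
                have h4 : (Finset.univ.filter (fun j => ω ∈ A j)).card = k := by
                  simpa [hAdef, hRdef] using hcount
                rw [h4]
      _ = (k : ENNReal) := by simp
  have hNA : ((n+1 : ℕ) : ENNReal) * μ (A (Fin.last n)) = (k : ENNReal) := by
    rw [← hsum]
    rw [Finset.sum_congr rfl fun j _ => hAeq j, Finset.sum_const, Finset.card_univ,
      Fintype.card_fin, nsmul_eq_mul]
  have hμA : μ (A (Fin.last n)) = (k : ENNReal) / ((n+1 : ℕ) : ENNReal) := by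
    exact (ENNReal.eq_div_iff (by simp) (by simp)).mpr hNA
  -- the event equals A (Fin.last n)
  have hset : {ω | X (Fin.last n) ω ≤ q ω} = A (Fin.last n) := by
    ext ω
    set t := X (Fin.last n) ω with ht
    set l : List ℝ := List.ofFn (fun i : Fin n => X i.castSucc ω) with hl
    set s := l.insertionSort (· ≤ ·) with hs
    have hslen : s.length = n := by
      rw [hs, List.length_insertionSort, hl, List.length_ofFn]
    have hk1n : k - 1 < s.length := by omega
    have hsorted : s.Pairwise (· ≤ ·) := List.pairwise_insertionSort _ _
    have hperm : s.countP (fun x => decide (x < t)) = l.countP (fun x => decide (x < t)) :=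
      (List.perm_insertionSort _ _).countP_eq _
    have hcard : l.countP (fun x => decide (x < t))
        = (Finset.univ.filter (fun i : Fin n => X i.castSucc ω < t)).card :=
      countP_ofFn_eq_card _ t
    have hRlast : R (Fin.last n) (Φ ω)
        = (Finset.univ.filter (fun i : Fin n => X i.castSucc ω < t)).card := by
      simp only [hRdef, hΦdef]
      rw [Finset.card_filter, Finset.card_filter, Fin.sum_univ_castSucc]
      simp [← ht]
    simp only [Set.mem_setOf_eq, hAdef, hq ω]
    rw [List.getD_eq_getElem s 0 hk1n]
    constructor
    · intro hle
      rw [hRlast, ← hcard, ← hperm]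
      have h3 : ¬ (s[k-1] < t) := not_lt.mpr hle
      rw [sorted_getElem_lt_iff hsorted t (k-1) hk1n] at h3
      omega
    · intro hlt
      by_contra hc
      push_neg at hc
      have h3 : k - 1 < s.countP (fun x => decide (x < t)) := by
        rw [← sorted_getElem_lt_iff hsorted t (k-1) hk1n]; exact hc
      rw [hperm, hcard, ← hRlast] at h3
      omega
  rw [hset, hμA]
  rw [ENNReal.toReal_div]
  simp only [ENNReal.toReal_natCast]
  rw [ge_iff_le, le_div_iff₀ (by positivity)]
  have hceil : (1 - ε) * ((n:ℝ) + 1) ≤ (k : ℝ) := by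
    rw [hk]
    exact_mod_cast Nat.le_ceil ((1 - ε) * ((n : ℝ) + 1))
  calc (1 - ε) * (((n+1 : ℕ)) : ℝ) = (1 - ε) * ((n:ℝ) + 1) := by push_cast; ring
    _ ≤ (k : ℝ) := hceil
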